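/- Let β ∈ [0,1) and let u ∈ ℝ^n satisfy u_j > 0 for all j, ∑_{j=1}^n u_j = n, and ‖u − e‖_∞ ≤ β. Then ((1−3β)/(2(1−β)n))·‖u − e‖₂² ≤ δ(u) ≤ (1/n)·‖u − e‖₂². -/

import Mathlib

/-- The entropy proximity measure `δ(u) = (1/n) ∑ u_j ln u_j`. -/
noncomputable def entropyDelta (n : ℕ) (u : Fin n → ℝ) : ℝ :=
  (1 / (n : ℝ)) * ∑ j, u j * Real.log (u j)

lemma aux_neg (x : ℝ) (hx : 0 < x) (hx1 : x ≤ 1) :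
    (x - 1) + (x - 1) ^ 2 / 2 ≤ x * Real.log x := by
  have key : AntitoneOn (fun y : ℝ => y * Real.log y - (y - 1) - (y - 1) ^ 2 / 2)
      (Set.Icc x 1) := by
    apply antitoneOn_of_deriv_nonpos (convex_Icc x 1)
    · apply ContinuousOn.sub
      apply ContinuousOn.sub
      · exact continuousOn_id.mul (Real.continuousOn_log.mono (fun y hy => by
          simp only [Set.mem_compl_iff, Set.mem_singleton_iff]
          have := hy.1
          intro h; rw [h] at this; linarith))
      · fun_prop
      · fun_prop
    · intro y hy
      rw [interior_Icc] at hy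
      have hy0 : 0 < y := lt_trans hx hy.1
      have h1 : HasDerivAt (fun y : ℝ => y * Real.log y) (Real.log y + 1) y := by
        have := (hasDerivAt_id y).mul (Real.hasDerivAt_log hy0.ne')
        refine this.congr_deriv ?_
        simp [hy0.ne']
      have h2 : HasDerivAt (fun y : ℝ => (y - 1)) (1 : ℝ) y := by
        simpa using (hasDerivAt_id y).sub_const 1
      have h3 : HasDerivAt (fun y : ℝ => (y - 1) ^ 2 / 2) (y - 1) y := by
        have := (h2.pow 2).div_const 2
        refine this.congr_deriv ?_
        ring
      exact ((h1.sub h2).sub h3).differentiableAt.differentiableWithinAt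
    · intro y hy
      rw [interior_Icc] at hy
      have hy0 : 0 < y := lt_trans hx hy.1
      have h1 : HasDerivAt (fun y : ℝ => y * Real.log y) (Real.log y + 1) y := by
        have := (hasDerivAt_id y).mul (Real.hasDerivAt_log hy0.ne')
        refine this.congr_deriv ?_
        simp [hy0.ne']
      have h2 : HasDerivAt (fun y : ℝ => (y - 1)) (1 : ℝ) y := by
        simpa using (hasDerivAt_id y).sub_const 1
      have h3 : HasDerivAt (fun y : ℝ => (y - 1) ^ 2 / 2) (y - 1) y := by
        have := (h2.pow 2).div_const 2
        refine this.congr_deriv ?_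
        ring
      rw [HasDerivAt.deriv (f := fun y : ℝ => y * Real.log y - (y - 1) - (y - 1) ^ 2 / 2) ((h1.sub h2).sub h3)]
      have := Real.log_le_sub_one_of_pos hy0
      linarith
  have h0 := key (Set.left_mem_Icc.mpr hx1) (Set.right_mem_Icc.mpr hx1) hx1
  simp only [Real.log_one] at h0
  nlinarith [h0]

lemma aux_pos (x : ℝ) (h1 : 1 ≤ x) :
    (x - 1) - (x - 1) ^ 2 / 2 ≤ Real.log x := by
  have key : MonotoneOn (fun y : ℝ => Real.log y - (y - 1) + (y - 1) ^ 2 / 2)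
      (Set.Icc 1 x) := by
    apply monotoneOn_of_deriv_nonneg (convex_Icc 1 x)
    · apply ContinuousOn.add
      apply ContinuousOn.sub
      · exact Real.continuousOn_log.mono (fun y hy => by
          simp only [Set.mem_compl_iff, Set.mem_singleton_iff]
          have := hy.1
          intro h; rw [h] at this; linarith)
      · fun_prop
      · fun_prop
    · intro y hy
      rw [interior_Icc] at hy
      have hy0 : (0:ℝ) < y := lt_trans one_pos hy.1
      have h2 : HasDerivAt (fun y : ℝ => (y - 1)) (1 : ℝ) y := by
        simpa using (hasDerivAt_id y).sub_const 1
      have h3 : HasDerivAt (fun y : ℝ => (y - 1) ^ 2 / 2) (y - 1) y := by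
        have := (h2.pow 2).div_const 2
        refine this.congr_deriv ?_
        ring
      exact (((Real.hasDerivAt_log hy0.ne').sub h2).add h3).differentiableAt.differentiableWithinAt
    · intro y hy
      rw [interior_Icc] at hy
      have hy0 : (0:ℝ) < y := lt_trans one_pos hy.1
      have h2 : HasDerivAt (fun y : ℝ => (y - 1)) (1 : ℝ) y := by
        simpa using (hasDerivAt_id y).sub_const 1
      have h3 : HasDerivAt (fun y : ℝ => (y - 1) ^ 2 / 2) (y - 1) y := by
        have := (h2.pow 2).div_const 2
        refine this.congr_deriv ?_
        ring
      rw [HasDerivAt.deriv (f := fun y : ℝ => Real.log y - (y - 1) + (y - 1) ^ 2 / 2) (((Real.hasDerivAt_log hy0.ne').sub h2).add h3)]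
      have : 2 ≤ y⁻¹ + y := by
        rw [← sub_nonneg]
        have : y⁻¹ + y - 2 = (y - 1)^2 / y := by field_simp; ring
        rw [this]
        positivity
      linarith
  have h0 := key (Set.left_mem_Icc.mpr h1) (Set.right_mem_Icc.mpr h1) h1
  simp only [Real.log_one] at h0
  nlinarith [h0]

lemma pointwise_lower (β x : ℝ) (hβ0 : 0 ≤ β) (hβ1 : β < 1) (hx : 0 < x)
    (habs : |x - 1| ≤ β) :
    (1 - 3 * β) / (2 * (1 - β)) * (x - 1) ^ 2 ≤ x * Real.log x - (x - 1) := by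
  have hb := abs_le.mp habs
  rcases le_or_gt x 1 with h | h
  · have h1 := aux_neg x hx h
    have hc : (1 - 3 * β) / (2 * (1 - β)) ≤ 1 / 2 := by
      rw [div_le_div_iff₀ (by linarith) (by norm_num)]
      nlinarith
    nlinarith [sq_nonneg (x - 1), mul_le_mul_of_nonneg_right hc (sq_nonneg (x - 1))]
  · have h1 := aux_pos x h.le
    have ht : x - 1 ≤ β := hb.2
    have key : x * ((x - 1) - (x - 1) ^ 2 / 2) ≤ x * Real.log x :=
      mul_le_mul_of_nonneg_left h1 hx.le
    rw [div_mul_eq_mul_div, div_le_iff₀ (by linarith : (0:ℝ) < 2 * (1 - β))]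
    nlinarith [sq_nonneg (x - 1), mul_nonneg (mul_nonneg hβ0 (sub_nonneg.mpr h.le)) (sq_nonneg (x-1)),
      mul_nonneg (sub_nonneg.mpr (le_trans (by linarith : x - 1 ≤ β) (le_refl β))) (sq_nonneg (x-1))]

lemma pointwise_upper (x : ℝ) (hx : 0 < x) :
    x * Real.log x - (x - 1) ≤ (x - 1) ^ 2 := by
  have h := Real.log_le_sub_one_of_pos hx
  nlinarith [mul_le_mul_of_nonneg_left h hx.le]

theorem stmt_2 (n : ℕ) (hn : 1 ≤ n) (β : ℝ) (hβ0 : 0 ≤ β) (hβ1 : β < 1)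
    (u : Fin n → ℝ) (hu : ∀ j, 0 < u j) (hsum : ∑ j, u j = (n : ℝ))
    (hinf : ∀ j, |u j - 1| ≤ β) :
    (1 - 3 * β) / (2 * (1 - β) * n) * ∑ j, (u j - 1) ^ 2 ≤ entropyDelta n u ∧
      entropyDelta n u ≤ (1 / (n : ℝ)) * ∑ j, (u j - 1) ^ 2 := by
  have hn0 : (0:ℝ) < n := by exact_mod_cast Nat.pos_of_ne_zero (by omega)
  have hsub : ∑ j, (u j - 1) = 0 := by
    rw [Finset.sum_sub_distrib, hsum]
    simp
  have hkey : ∑ j, u j * Real.log (u j) = ∑ j, (u j * Real.log (u j) - (u j - 1)) := by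
    rw [Finset.sum_sub_distrib, hsub, sub_zero]
  constructor
  · have hlow : (1 - 3 * β) / (2 * (1 - β)) * ∑ j, (u j - 1) ^ 2
        ≤ ∑ j, u j * Real.log (u j) := by
      rw [hkey, Finset.mul_sum]
      exact Finset.sum_le_sum fun j _ => pointwise_lower β (u j) hβ0 hβ1 (hu j) (hinf j)
    have := mul_le_mul_of_nonneg_left hlow (le_of_lt (show (0:ℝ) < 1 / n by positivity))
    unfold entropyDelta
    calc (1 - 3 * β) / (2 * (1 - β) * n) * ∑ j, (u j - 1) ^ 2
        = 1 / n * ((1 - 3 * β) / (2 * (1 - β)) * ∑ j, (u j - 1) ^ 2) := by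
          field_simp
      _ ≤ 1 / n * ∑ j, u j * Real.log (u j) := this
  · have hup : ∑ j, u j * Real.log (u j) ≤ ∑ j, (u j - 1) ^ 2 := by
      rw [hkey]
      exact Finset.sum_le_sum fun j _ => pointwise_upper (u j) (hu j)
    unfold entropyDelta
    exact mul_le_mul_of_nonneg_left hup (by positivity)
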